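/- Let n ≥ 2, let Ω ⊆ ℝⁿ be an open connected set, and let f : Ω → ℝˡ. Then f is strongly 0-absolutely continuous if and only if f is constant on Ω. -/

import Mathlib

open MeasureTheory Metric Set Filter

noncomputable section

/-- The closed interval (box) `[a,b]` in `ℝⁿ`. -/
def box {n : ℕ} (a b : EuclideanSpace ℝ (Fin n)) : Set (EuclideanSpace ℝ (Fin n)) :=
  {x | ∀ ν, a ν ≤ x ν ∧ x ν ≤ b ν}

/-- `f` is strongly 0-absolutely continuous on `Ω`: for every `ε > 0` there is `δ > 0` such
that for every finite collection of pairwise disjoint intervals `[aᵢ,bᵢ] ⊆ Ω`,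
`∑ ℒⁿ([aᵢ,bᵢ]) < δ` implies `∑ |f(bᵢ) - f(aᵢ)|ⁿ < ε`. -/
def Strong0AC {n l : ℕ} (f : EuclideanSpace ℝ (Fin n) → EuclideanSpace ℝ (Fin l))
    (Ω : Set (EuclideanSpace ℝ (Fin n))) : Prop :=
  ∀ ε > 0, ∃ δ > 0, ∀ (k : ℕ) (a b : Fin k → EuclideanSpace ℝ (Fin n)),
    (∀ i, ∀ ν, a i ν ≤ b i ν) →
    (∀ i, box (a i) (b i) ⊆ Ω) →
    (Pairwise fun i j => Disjoint (box (a i) (b i)) (box (a j) (b j))) →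
    ∑ i, (volume (box (a i) (b i))).toReal < δ →
    ∑ i, ‖f (b i) - f (a i)‖ ^ n < ε

lemma box_vol_zero {n : ℕ} (a b : EuclideanSpace ℝ (Fin n)) (ν₀ : Fin n)
    (h : a ν₀ = b ν₀) : volume (box a b) = 0 := by
  have hsub : box a b ⊆ (AffineSubspace.mk' a (LinearMap.ker (EuclideanSpace.projₗ ν₀)) :
      AffineSubspace ℝ (EuclideanSpace ℝ (Fin n))) := by
    intro x hx
    rw [SetLike.mem_coe, AffineSubspace.mem_mk', LinearMap.mem_ker]
    show (x -ᵥ a) ν₀ = 0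
    have : x ν₀ = a ν₀ := le_antisymm (h ▸ (hx ν₀).2) (hx ν₀).1
    simp [vsub_eq_sub, PiLp.sub_apply, this]
  refine measure_mono_null hsub ?_
  apply Measure.addHaar_affineSubspace
  intro htop
  have : (a + EuclideanSpace.single ν₀ (1:ℝ)) ∈
      (AffineSubspace.mk' a (LinearMap.ker (EuclideanSpace.projₗ ν₀)) :
      AffineSubspace ℝ (EuclideanSpace ℝ (Fin n))) := htop ▸ AffineSubspace.mem_top ℝ _ _
  rw [AffineSubspace.mem_mk', LinearMap.mem_ker] at this
  have : ((a + EuclideanSpace.single ν₀ (1:ℝ)) -ᵥ a) ν₀ = 0 := this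
  simp [vsub_eq_sub, EuclideanSpace.single_apply] at this

lemma key {n l : ℕ} (hn : 2 ≤ n) {f : EuclideanSpace ℝ (Fin n) → EuclideanSpace ℝ (Fin l)}
    {Ω : Set (EuclideanSpace ℝ (Fin n))} (hf : Strong0AC f Ω)
    {a b : EuclideanSpace ℝ (Fin n)} (hab : ∀ ν, a ν ≤ b ν) (hsub : box a b ⊆ Ω)
    (hvol : volume (box a b) = 0) : f a = f b := by
  have hnorm : ∀ ε > 0, ‖f b - f a‖ ^ n < ε := by
    intro ε hε
    obtain ⟨δ, hδ, H⟩ := hf ε hε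
    have := H 1 (fun _ => a) (fun _ => b) (fun _ => hab) (fun _ => hsub)
      (fun i j hij => absurd (Subsingleton.elim i j) hij) (by simp [hvol, hδ])
    simpa using this
  have h0 : ‖f b - f a‖ ^ n = 0 := by
    by_contra h
    have hp : 0 < ‖f b - f a‖ ^ n :=
      lt_of_le_of_ne (pow_nonneg (norm_nonneg _) n) (Ne.symm h)
    exact lt_irrefl _ (hnorm _ hp)
  have : f b - f a = 0 := by
    have := pow_eq_zero_iff (n := n) (by omega) |>.mp h0
    simpa [norm_eq_zero] using this
  linear_combination (norm := module) -this

lemma coordbound (p q c w : ℝ) (h1 : min p q ≤ w) (h2 : w ≤ max p q) :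
    |w - c| ≤ max |p - c| |q - c| := by
  rw [abs_sub_le_iff]
  rcases le_total p q with h | h
  · rw [min_eq_left h] at h1; rw [max_eq_right h] at h2
    constructor <;>
      linarith [le_abs_self (q - c), neg_abs_le (p - c),
        le_max_left |p - c| |q - c|, le_max_right |p - c| |q - c|]
  · rw [min_eq_right h] at h1; rw [max_eq_left h] at h2
    constructor <;>
      linarith [le_abs_self (p - c), neg_abs_le (q - c),
        le_max_left |p - c| |q - c|, le_max_right |p - c| |q - c|]

lemma move {n l : ℕ} (hn : 2 ≤ n) {f : EuclideanSpace ℝ (Fin n) → EuclideanSpace ℝ (Fin l)}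
    {Ω : Set (EuclideanSpace ℝ (Fin n))} (hf : Strong0AC f Ω)
    (x y : EuclideanSpace ℝ (Fin n)) (j : Fin n) (hxy : ∀ ν, ν ≠ j → x ν = y ν)
    (hΩ : ∀ z : EuclideanSpace ℝ (Fin n),
      (∀ ν, min (x ν) (y ν) ≤ z ν ∧ z ν ≤ max (x ν) (y ν)) → z ∈ Ω) :
    f x = f y := by
  have hnt : Nontrivial (Fin n) := Fin.nontrivial_iff_two_le.mpr hn
  obtain ⟨ν₀, hν₀⟩ := exists_ne j
  rcases le_total (x j) (y j) with h | h
  · have hab : ∀ ν, x ν ≤ y ν := by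
      intro ν
      by_cases hν : ν = j
      · subst hν; exact h
      · exact (hxy ν hν).le
    refine key hn hf hab (fun z hz => hΩ z fun ν =>
      ⟨le_trans (min_le_left _ _) (hz ν).1, le_trans (hz ν).2 (le_max_right _ _)⟩) ?_
    exact box_vol_zero x y ν₀ (hxy ν₀ hν₀)
  · have hab : ∀ ν, y ν ≤ x ν := by
      intro ν
      by_cases hν : ν = j
      · subst hν; exact h
      · exact (hxy ν hν).ge
    refine (key hn hf hab (fun z hz => hΩ z fun ν =>
      ⟨le_trans (min_le_right _ _) (hz ν).1, le_trans (hz ν).2 (le_max_left _ _)⟩) ?_).symm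
    exact box_vol_zero y x ν₀ (hxy ν₀ hν₀).symm

lemma ball_const {n l : ℕ} (hn : 2 ≤ n)
    {f : EuclideanSpace ℝ (Fin n) → EuclideanSpace ℝ (Fin l)}
    {Ω : Set (EuclideanSpace ℝ (Fin n))} (hf : Strong0AC f Ω)
    (c : EuclideanSpace ℝ (Fin n)) (r : ℝ) (hr : 0 < r) (hball : ball c r ⊆ Ω)
    (x y : EuclideanSpace ℝ (Fin n)) (hx : x ∈ ball c (r / 2)) (hy : y ∈ ball c (r / 2)) :
    f x = f y := by
  rw [mem_ball] at hx hy
  -- any point whose coordinates are between those of x and y lies in the ball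
  have hin : ∀ w : EuclideanSpace ℝ (Fin n),
      (∀ ν, |w ν - c ν| ≤ max |x ν - c ν| |y ν - c ν|) → w ∈ Ω := by
    intro w hw
    apply hball
    rw [mem_ball]
    have hsq : dist w c ^ 2 ≤ dist x c ^ 2 + dist y c ^ 2 := by
      rw [EuclideanSpace.dist_eq, EuclideanSpace.dist_eq, EuclideanSpace.dist_eq,
        Real.sq_sqrt (by positivity), Real.sq_sqrt (by positivity),
        Real.sq_sqrt (by positivity), ← Finset.sum_add_distrib]
      refine Finset.sum_le_sum fun ν _ => ?_
      have h := hw ν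
      simp only [Real.dist_eq]
      rcases max_cases |x ν - c ν| |y ν - c ν| with ⟨he, _⟩ | ⟨he, _⟩ <;> rw [he] at h <;>
        nlinarith [abs_nonneg (w ν - c ν), abs_nonneg (x ν - c ν), abs_nonneg (y ν - c ν),
          sq_abs (w ν - c ν), sq_abs (x ν - c ν), sq_abs (y ν - c ν)]
    have hlt : dist w c ^ 2 < r ^ 2 := by
      nlinarith [dist_nonneg (x := x) (y := c), dist_nonneg (x := y) (y := c)]
    exact lt_of_pow_lt_pow_left₀ 2 hr.le hlt
  -- staircase
  set z : ℕ → EuclideanSpace ℝ (Fin n) := fun k => WithLp.toLp 2 (fun ν : Fin n => if (ν : ℕ) < k then y ν else x ν)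
    with hz
  have hstep : ∀ k : ℕ, k < n → f (z k) = f (z (k + 1)) := by
    intro k hk
    refine move hn hf (z k) (z (k + 1)) ⟨k, hk⟩ ?_ ?_
    · intro ν hν
      have : (ν : ℕ) ≠ k := fun hc => hν (Fin.ext hc)
      simp only [hz, WithLp.ofLp_toLp]
      by_cases h1 : (ν : ℕ) < k
      · rw [if_pos h1, if_pos (by omega)]
      · rw [if_neg h1, if_neg (by omega)]
    · intro w hw
      apply hin
      intro ν
      have h1 := (hw ν).1
      have h2 := (hw ν).2
      have hmem : ∀ m : ℕ, z m ν = x ν ∨ z m ν = y ν := by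
        intro m; simp only [hz]; by_cases h : (ν : ℕ) < m <;> simp [h]
      have ha : ∀ m : ℕ, min (x ν) (y ν) ≤ z m ν := by
        intro m
        rcases hmem m with h | h <;> rw [h]
        · exact min_le_left _ _
        · exact min_le_right _ _
      have hb : ∀ m : ℕ, z m ν ≤ max (x ν) (y ν) := by
        intro m
        rcases hmem m with h | h <;> rw [h]
        · exact le_max_left _ _
        · exact le_max_right _ _
      have key1 : min (x ν) (y ν) ≤ w ν := le_trans (le_min (ha k) (ha (k + 1))) h1
      have key2 : w ν ≤ max (x ν) (y ν) := le_trans h2 (max_le (hb k) (hb (k + 1)))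
      exact coordbound (x ν) (y ν) (c ν) (w ν) key1 key2
  have hzx : z 0 = x := by ext ν; simp [hz]
  have hzy : z n = y := by ext ν; simp [hz, ν.isLt]
  have hchain : ∀ k : ℕ, k ≤ n → f x = f (z k) := by
    intro k
    induction k with
    | zero => intro _; rw [hzx]
    | succ m ih => intro hm; rw [ih (by omega), hstep m (by omega)]
  rw [← hzy]
  exact hchain n le_rfl

/-- For `n ≥ 2`, an open connected `Ω ⊆ ℝⁿ` and `f : Ω → ℝˡ`, `f` is strongly 0-absolutely
continuous if and only if `f` is constant on `Ω`. -/
theorem strong0AC_iff_constant {n l : ℕ} (hn : 2 ≤ n)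
    (Ω : Set (EuclideanSpace ℝ (Fin n))) (hΩopen : IsOpen Ω) (hΩconn : IsConnected Ω)
    (f : EuclideanSpace ℝ (Fin n) → EuclideanSpace ℝ (Fin l)) :
    Strong0AC f Ω ↔ ∀ x ∈ Ω, ∀ y ∈ Ω, f x = f y := by
  constructor
  · intro hf x hx y hy
    have hloc : ∀ p ∈ Ω, ∃ ρ > 0, ball p ρ ⊆ Ω ∧ ∀ q ∈ ball p ρ, f q = f p := by
      intro p hp
      obtain ⟨r, hr, hball⟩ := Metric.isOpen_iff.mp hΩopen p hp
      refine ⟨r / 2, by linarith, (ball_subset_ball (by linarith)).trans hball, fun q hq => ?_⟩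
      exact (ball_const hn hf p r hr hball p q (mem_ball_self (by linarith)) hq).symm
    set u := {p : EuclideanSpace ℝ (Fin n) | p ∈ Ω ∧ f p = f x} with hu_def
    set v := {p : EuclideanSpace ℝ (Fin n) | p ∈ Ω ∧ f p ≠ f x} with hv_def
    have hu : IsOpen u := by
      rw [Metric.isOpen_iff]
      intro p hp
      obtain ⟨ρ, hρ, hballΩ, hconst⟩ := hloc p hp.1
      exact ⟨ρ, hρ, fun q hq => ⟨hballΩ hq, (hconst q hq).trans hp.2⟩⟩
    have hv : IsOpen v := by
      rw [Metric.isOpen_iff]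
      intro p hp
      obtain ⟨ρ, hρ, hballΩ, hconst⟩ := hloc p hp.1
      exact ⟨ρ, hρ, fun q hq => ⟨hballΩ hq, (hconst q hq) ▸ hp.2⟩⟩
    by_contra hne
    have hcover : Ω ⊆ u ∪ v := by
      intro p hp
      by_cases h : f p = f x
      · exact Or.inl ⟨hp, h⟩
      · exact Or.inr ⟨hp, h⟩
    have h1 : (Ω ∩ u).Nonempty := ⟨x, hx, hx, rfl⟩
    have h2 : (Ω ∩ v).Nonempty := ⟨y, hy, hy, fun h => hne h.symm⟩
    obtain ⟨p, _, hpu, hpv⟩ := hΩconn.isPreconnected u v hu hv hcover h1 h2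
    exact hpv.2 hpu.2
  · intro hconst ε hε
    refine ⟨1, one_pos, fun k a b hab hsub _ _ => ?_⟩
    have hz : ∀ i, ‖f (b i) - f (a i)‖ ^ n = 0 := by
      intro i
      have hai : a i ∈ box (a i) (b i) := fun ν => ⟨le_rfl, hab i ν⟩
      have hbi : b i ∈ box (a i) (b i) := fun ν => ⟨hab i ν, le_rfl⟩
      rw [hconst (b i) (hsub i hbi) (a i) (hsub i hai), sub_self, norm_zero,
        zero_pow (by omega)]
    rw [Finset.sum_eq_zero fun i _ => hz i]
    exact hε
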